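/- Let Γ be a group, D a Γ-graded division ring, S a nonzero ring, and f : D → S a ring homomorphism. Let n ≥ 1 and let A be an n×n matrix over D that is homogeneous of distribution (ᾱ, β̄) for some ᾱ, β̄ ∈ Γ^n. Then A is invertible in the matrix ring M_n(D) if and only if A^f is invertible in M_n(S). -/

import Mathlib

open Matrix

universe u v w

section GradedDefs

variable {Γ : Type u} [Group Γ] {R : Type v} [Ring R]

/-- `A` is a homogeneous matrix of distribution `(α, β)`:
its `(i,j)` entry lies in `𝒜 (α i * (β j)⁻¹)`. -/
def IsHomog (𝒜 : Γ → AddSubgroup R) {m n : ℕ}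
    (A : Matrix (Fin m) (Fin n) R) (α : Fin m → Γ) (β : Fin n → Γ) : Prop :=
  ∀ i j, A i j ∈ 𝒜 (α i * (β j)⁻¹)

/-- `A` is a homogeneous matrix for some distribution. -/
def IsHomogSq (𝒜 : Γ → AddSubgroup R) {m n : ℕ}
    (A : Matrix (Fin m) (Fin n) R) : Prop :=
  ∃ (α : Fin m → Γ) (β : Fin n → Γ), IsHomog 𝒜 A α β

end GradedDefs

/-- Square matrices over `R` of arbitrary finite size. -/
abbrev SqMat (R : Type v) : Type v := Σ n : ℕ, Matrix (Fin n) (Fin n) R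

section GradedDefs

variable {Γ : Type u} [Group Γ] {R : Type v} [Ring R]

/-- Diagonal sum `A ⊕ B` of two (rectangular) matrices. -/
def diagSum {m n m' n' : ℕ} (A : Matrix (Fin m) (Fin n) R)
    (B : Matrix (Fin m') (Fin n') R) : Matrix (Fin (m + m')) (Fin (n + n')) R :=
  Matrix.reindex finSumFinEquiv finSumFinEquiv (Matrix.fromBlocks A 0 0 B)

/-- Block lower triangular matrix `[[A, 0], [C, B]]`. -/
def lowerBlockSum {n m : ℕ} (A : Matrix (Fin n) (Fin n) R) (B : Matrix (Fin m) (Fin m) R)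
    (C : Matrix (Fin m) (Fin n) R) : Matrix (Fin (n + m)) (Fin (n + m)) R :=
  Matrix.reindex finSumFinEquiv finSumFinEquiv (Matrix.fromBlocks A 0 C B)

/-- Block upper triangular matrix `[[A, C], [0, B]]` with rectangular blocks. -/
def upperBlockSum {m n m' n' : ℕ} (A : Matrix (Fin m) (Fin n) R)
    (B : Matrix (Fin m') (Fin n') R) (C : Matrix (Fin m) (Fin n') R) :
    Matrix (Fin (m + m')) (Fin (n + n')) R :=
  Matrix.reindex finSumFinEquiv finSumFinEquiv (Matrix.fromBlocks A C 0 B)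

/-- `C` is the determinantal sum of `A` and `B` with respect to some column or row:
`A` and `B` agree away from that column (row) and the distinguished column (row) of `C`
is the sum of the corresponding columns (rows) of `A` and `B`. -/
def IsDetSum {n : ℕ} (A B C : Matrix (Fin n) (Fin n) R) : Prop :=
  (∃ c : Fin n, (∀ i j, j ≠ c → A i j = B i j) ∧
      ∀ i j, C i j = if j = c then A i j + B i j else A i j) ∨
  (∃ r : Fin n, (∀ i j, i ≠ r → A i j = B i j) ∧
      ∀ i j, C i j = if i = r then A i j + B i j else A i j)

/-- `C` is the determinantal sum of the homogeneous matrices `A` and `B`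
(which have a common distribution). -/
def GrDetSum (𝒜 : Γ → AddSubgroup R) {n : ℕ} (A B C : Matrix (Fin n) (Fin n) R) : Prop :=
  (∃ α β : Fin n → Γ, IsHomog 𝒜 A α β ∧ IsHomog 𝒜 B α β) ∧ IsDetSum A B C

/-- A square homogeneous matrix `A` is gr-full if whenever `A = P * Q` with `P`
homogeneous of distribution `(α, lam)` and `Q` homogeneous of distribution `(lam, β)`
where `lam` has length `r`, then `r ≥ n`. -/
def IsGrFull (𝒜 : Γ → AddSubgroup R) {n : ℕ} (A : Matrix (Fin n) (Fin n) R) : Prop :=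
  ∀ (r : ℕ) (P : Matrix (Fin n) (Fin r) R) (Q : Matrix (Fin r) (Fin n) R)
    (α : Fin n → Γ) (lam : Fin r → Γ) (β : Fin n → Γ),
    IsHomog 𝒜 P α lam → IsHomog 𝒜 Q lam β → A = P * Q → n ≤ r

/-- gr-prime matrix ideal: a set of square homogeneous matrices satisfying (PM1)–(PM6). -/
structure IsGrPrimeMatrixIdeal (𝒜 : Γ → AddSubgroup R) (P : Set (SqMat R)) : Prop where
  subset_homog : ∀ p ∈ P, IsHomogSq 𝒜 p.2
  pm1 : ∀ {n : ℕ} (A : Matrix (Fin n) (Fin n) R),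
    IsHomogSq 𝒜 A → ¬ IsGrFull 𝒜 A → (⟨n, A⟩ : SqMat R) ∈ P
  pm2 : ∀ {n : ℕ} (A B C : Matrix (Fin n) (Fin n) R),
    (⟨n, A⟩ : SqMat R) ∈ P → (⟨n, B⟩ : SqMat R) ∈ P → GrDetSum 𝒜 A B C →
    (⟨n, C⟩ : SqMat R) ∈ P
  pm3 : ∀ {m n : ℕ} (A : Matrix (Fin m) (Fin m) R) (B : Matrix (Fin n) (Fin n) R),
    (⟨m, A⟩ : SqMat R) ∈ P → IsHomogSq 𝒜 B → (⟨m + n, diagSum A B⟩ : SqMat R) ∈ P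
  pm4 : ∀ {m n : ℕ} (A : Matrix (Fin m) (Fin m) R) (B : Matrix (Fin n) (Fin n) R),
    IsHomogSq 𝒜 A → IsHomogSq 𝒜 B → (⟨m + n, diagSum A B⟩ : SqMat R) ∈ P →
    (⟨m, A⟩ : SqMat R) ∈ P ∨ (⟨n, B⟩ : SqMat R) ∈ P
  pm5 : (⟨1, (1 : Matrix (Fin 1) (Fin 1) R)⟩ : SqMat R) ∉ P
  pm6 : ∀ {n : ℕ} (A : Matrix (Fin n) (Fin n) R) (e f : Equiv.Perm (Fin n)),
    (⟨n, A⟩ : SqMat R) ∈ P → (⟨n, A.submatrix ⇑e ⇑f⟩ : SqMat R) ∈ P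

/-- gr-matrix ideal: a set of square homogeneous matrices satisfying (I1)–(I5). -/
structure IsGrMatrixIdeal (𝒜 : Γ → AddSubgroup R) (I : Set (SqMat R)) : Prop where
  subset_homog : ∀ p ∈ I, IsHomogSq 𝒜 p.2
  i1 : ∀ {n : ℕ} (A : Matrix (Fin n) (Fin n) R),
    IsHomogSq 𝒜 A → ¬ IsGrFull 𝒜 A → (⟨n, A⟩ : SqMat R) ∈ I
  i2 : ∀ {n : ℕ} (A B C : Matrix (Fin n) (Fin n) R),
    (⟨n, A⟩ : SqMat R) ∈ I → (⟨n, B⟩ : SqMat R) ∈ I → GrDetSum 𝒜 A B C →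
    (⟨n, C⟩ : SqMat R) ∈ I
  i3 : ∀ {m n : ℕ} (A : Matrix (Fin m) (Fin m) R) (B : Matrix (Fin n) (Fin n) R),
    (⟨m, A⟩ : SqMat R) ∈ I → IsHomogSq 𝒜 B → (⟨m + n, diagSum A B⟩ : SqMat R) ∈ I
  i4 : ∀ {n : ℕ} (A : Matrix (Fin n) (Fin n) R) (e f : Equiv.Perm (Fin n)),
    (⟨n, A⟩ : SqMat R) ∈ I → (⟨n, A.submatrix ⇑e ⇑f⟩ : SqMat R) ∈ I
  i5 : ∀ {n : ℕ} (A : Matrix (Fin n) (Fin n) R),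
    (⟨n + 1, diagSum A (1 : Matrix (Fin 1) (Fin 1) R)⟩ : SqMat R) ∈ I →
    (⟨n, A⟩ : SqMat R) ∈ I

/-- The diagonal sum of `r` copies of `A`. -/
def diagIter {n : ℕ} (A : Matrix (Fin n) (Fin n) R) :
    (r : ℕ) → Matrix (Fin (n * r)) (Fin (n * r)) R
  | 0 => 0
  | r + 1 => diagSum (diagIter A r) A

/-- Iterated determinantal sums (with arbitrary bracketing) of elements of `W`. -/
inductive IsDetSumOf (𝒜 : Γ → AddSubgroup R) (W : Set (SqMat R)) : SqMat R → Prop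
  | base (p : SqMat R) (hp : p ∈ W) : IsDetSumOf 𝒜 W p
  | step {n : ℕ} (A B C : Matrix (Fin n) (Fin n) R)
      (hA : IsDetSumOf 𝒜 W ⟨n, A⟩) (hB : IsDetSumOf 𝒜 W ⟨n, B⟩)
      (h : GrDetSum 𝒜 A B C) : IsDetSumOf 𝒜 W ⟨n, C⟩

/-- The homogeneous rational closure of degree `γ`: entries `(j,i)` of inverses of matrices
`A^f` with `A ∈ Sig` homogeneous of distribution `(α, β)` and `β j * (α i)⁻¹ = γ`. -/
def RatCl (𝒜 : Γ → AddSubgroup R) {S : Type w} [Ring S] (Sig : Set (SqMat R)) (f : R →+* S)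
    (γ : Γ) : Set S :=
  {x | ∃ (n : ℕ) (A : Matrix (Fin n) (Fin n) R) (α β : Fin n → Γ) (i j : Fin n)
        (B : Matrix (Fin n) (Fin n) S),
      (⟨n, A⟩ : SqMat R) ∈ Sig ∧ IsHomog 𝒜 A α β ∧ β j * (α i)⁻¹ = γ ∧
      (A.map ⇑f) * B = 1 ∧ B * (A.map ⇑f) = 1 ∧ B j i = x}

/-- gr-lower semimultiplicative set of square homogeneous matrices. -/
def IsGrLowerSemimult (𝒜 : Γ → AddSubgroup R) (Sig : Set (SqMat R)) : Prop :=
  ((⟨1, (1 : Matrix (Fin 1) (Fin 1) R)⟩ : SqMat R) ∈ Sig) ∧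
  ∀ {n m : ℕ} (A : Matrix (Fin n) (Fin n) R) (B : Matrix (Fin m) (Fin m) R)
    (α β : Fin n → Γ) (α' β' : Fin m → Γ) (C : Matrix (Fin m) (Fin n) R),
    (⟨n, A⟩ : SqMat R) ∈ Sig → (⟨m, B⟩ : SqMat R) ∈ Sig →
    IsHomog 𝒜 A α β → IsHomog 𝒜 B α' β' → IsHomog 𝒜 C α' β →
    (⟨n + m, lowerBlockSum A B C⟩ : SqMat R) ∈ Sig

end GradedDefs

/-- A homomorphism of `Γ`-graded rings from `(R, 𝒜)` to a `Γ`-graded division ring. -/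
structure GrDivRingHom (Γ : Type u) [Group Γ] [DecidableEq Γ] (R : Type v) [Ring R]
    (𝒜 : Γ → AddSubgroup R) where
  K : Type (max u v)
  [ringK : Ring K]
  [nontrivialK : Nontrivial K]
  grading : Γ → AddSubgroup K
  internal : DirectSum.IsInternal grading
  one_mem : (1 : K) ∈ grading 1
  mul_mem : ∀ {γ δ : Γ} {x y : K}, x ∈ grading γ → y ∈ grading δ → x * y ∈ grading (γ * δ)
  isUnit_of_ne : ∀ {γ : Γ} {x : K}, x ∈ grading γ → x ≠ 0 → IsUnit x
  φ : R →+* K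
  map_mem : ∀ {γ : Γ} {r : R}, r ∈ 𝒜 γ → φ r ∈ grading γ

attribute [instance] GrDivRingHom.ringK GrDivRingHom.nontrivialK


section AuxGradedInverse

variable {Γ : Type*} [Group Γ] [DecidableEq Γ] {D : Type*} [Ring D]
  (𝒜 : Γ → AddSubgroup D)

private theorem homog_inv' (hinternal : DirectSum.IsInternal 𝒜)
    (hone : (1 : D) ∈ 𝒜 1)
    (hmul : ∀ {γ δ : Γ} {x y : D}, x ∈ 𝒜 γ → y ∈ 𝒜 δ → x * y ∈ 𝒜 (γ * δ))
    {γ : Γ} {x y : D} (hx : x ∈ 𝒜 γ) (h1 : x * y = 1) (h2 : y * x = 1) :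
    y ∈ 𝒜 γ⁻¹ := by
  classical
  letI : DirectSum.Decomposition 𝒜 := hinternal.chooseDecomposition
  have hy : ∑ δ ∈ (DirectSum.decompose 𝒜 y).support, ((DirectSum.decompose 𝒜 y) δ : D) = y :=
    DirectSum.sum_support_decompose 𝒜 y
  rw [← hy]
  refine AddSubgroup.sum_mem _ (fun δ hδ => ?_)
  by_cases hc : δ = γ⁻¹
  · exact hc ▸ SetLike.coe_mem _
  · let φ : D →+ D :=
      { toFun := fun z => ((DirectSum.decompose 𝒜 z) (γ * δ) : D)
        map_zero' := by simp
        map_add' := by intro a b; simp }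
    have key : x * ((DirectSum.decompose 𝒜 y) δ : D) = 0 := by
      have hcomp : ((DirectSum.decompose 𝒜 (x * y)) (γ * δ) : D)
          = x * ((DirectSum.decompose 𝒜 y) δ : D) := by
        conv_lhs => rw [← hy, Finset.mul_sum]
        have := map_sum φ
          (fun δ' => x * ((DirectSum.decompose 𝒜 y) δ' : D))
          (DirectSum.decompose 𝒜 y).support
        refine this.trans ?_
        have h₀ : ∀ δ' ∈ (DirectSum.decompose 𝒜 y).support, δ' ≠ δ →
            ((DirectSum.decompose 𝒜 (x * ((DirectSum.decompose 𝒜 y) δ' : D))) (γ * δ) : D) = 0 := by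
          intro δ' _ hδ'
          rw [DirectSum.decompose_of_mem_ne 𝒜 (hmul hx (SetLike.coe_mem _))
            (fun h => hδ' (mul_left_cancel h))]
        refine (Finset.sum_eq_single_of_mem δ hδ h₀).trans
          (DirectSum.decompose_of_mem_same 𝒜 (hmul hx (SetLike.coe_mem _)))
      have h0 : ((DirectSum.decompose 𝒜 (x * y)) (γ * δ) : D) = 0 := by
        rw [h1, DirectSum.decompose_of_mem_ne 𝒜 hone
          (fun h => hc (eq_inv_of_mul_eq_one_right h.symm))]
      rw [← hcomp, h0]
    have hz : ((DirectSum.decompose 𝒜 y) δ : D) = 0 := by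
      calc ((DirectSum.decompose 𝒜 y) δ : D)
          = (y * x) * ((DirectSum.decompose 𝒜 y) δ : D) := by rw [h2, one_mul]
        _ = y * (x * ((DirectSum.decompose 𝒜 y) δ : D)) := by rw [mul_assoc]
        _ = 0 := by rw [key, mul_zero]
    rw [hz]; exact zero_mem _

variable [Nontrivial D]

private theorem key_lemma (hinternal : DirectSum.IsInternal 𝒜)
    (hone : (1 : D) ∈ 𝒜 1)
    (hmul : ∀ {γ δ : Γ} {x y : D}, x ∈ 𝒜 γ → y ∈ 𝒜 δ → x * y ∈ 𝒜 (γ * δ))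
    (hdiv : ∀ {γ : Γ} {x : D}, x ∈ 𝒜 γ → x ≠ 0 → IsUnit x) :
    ∀ (n : ℕ) (A : Matrix (Fin n) (Fin n) D) (α β : Fin n → Γ),
    (∀ i j, A i j ∈ 𝒜 (α i * (β j)⁻¹)) →
    IsUnit A ∨ ∃ (γ : Γ) (v : Fin n → D), v ≠ 0 ∧ (∀ i, v i ∈ 𝒜 (γ * (α i)⁻¹)) ∧ v ᵥ* A = 0 := by
  intro n
  induction n with
  | zero =>
    intro A α β hA
    left
    haveI : Subsingleton (Matrix (Fin 0) (Fin 0) D) :=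
      ⟨fun M M' => by ext i; exact i.elim0⟩
    exact ⟨⟨A, A, Subsingleton.elim _ _, Subsingleton.elim _ _⟩, rfl⟩
  | succ n ih =>
    intro A α β hA
    set r : Fin (n + 1) := Fin.last n with hr
    by_cases hrow : ∀ j, A r j = 0
    · right
      refine ⟨α r, Pi.single r 1, ?_, ?_, ?_⟩
      · intro h
        have h1 := congrFun h r
        rw [Pi.single_eq_same] at h1
        exact one_ne_zero h1
      · intro i
        rcases eq_or_ne i r with rfl | hne
        · simpa [Pi.single_eq_same, mul_inv_cancel] using hone
        · simp [Pi.single_eq_of_ne hne, zero_mem]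
      · funext j
        simp only [Matrix.vecMul, dotProduct, Pi.zero_apply]
        refine Finset.sum_eq_zero fun i _ => ?_
        rcases eq_or_ne i r with rfl | hne
        · simp [hrow j]
        · simp [Pi.single_eq_of_ne hne]
    · push_neg at hrow
      obtain ⟨j₀, hj₀⟩ := hrow
      obtain ⟨u, hu⟩ := hdiv (hA r j₀) hj₀
      set uinv : D := ↑u⁻¹ with huinv_def
      have hu1 : A r j₀ * uinv = 1 := by rw [← hu]; exact u.mul_inv
      have hu2 : uinv * A r j₀ = 1 := by rw [← hu]; exact u.inv_mul
      have huinv : uinv ∈ 𝒜 (β j₀ * (α r)⁻¹) := by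
        have := homog_inv' 𝒜 hinternal hone hmul (hA r j₀) hu1 hu2
        simpa [_root_.mul_inv_rev] using this
      have hu1' : ∀ x : D, A r j₀ * (uinv * x) = x := fun x => by
        rw [← mul_assoc, hu1, one_mul]
      have hu2' : ∀ x : D, uinv * (A r j₀ * x) = x := fun x => by
        rw [← mul_assoc, hu2, one_mul]
      -- the (n × n) reduced matrix
      set B : Matrix (Fin n) (Fin n) D := fun i j =>
        A i.castSucc (j₀.succAbove j) - A i.castSucc j₀ * (uinv * A r (j₀.succAbove j)) with hBdef
      have hB : ∀ i j, B i j ∈ 𝒜 (α i.castSucc * (β (j₀.succAbove j))⁻¹) := by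
        intro i j
        refine sub_mem (hA _ _) ?_
        have h1 := hmul (hA i.castSucc j₀) (hmul huinv (hA r (j₀.succAbove j)))
        have : α i.castSucc * (β j₀)⁻¹ * (β j₀ * (α r)⁻¹ * (α r * (β (j₀.succAbove j))⁻¹))
            = α i.castSucc * (β (j₀.succAbove j))⁻¹ := by group
        rwa [this] at h1
      rcases ih B (fun i => α i.castSucc) (fun j => β (j₀.succAbove j)) hB with hUB | hker
      · -- B invertible ⇒ A invertible
        left
        obtain ⟨C, hBC, hCB⟩ := isUnit_iff_exists.mp hUB
        have hcsne : ∀ i' : Fin n, i'.castSucc ≠ r := fun i' => (Fin.castSucc_lt_last i').ne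
        set N : Matrix (Fin (n+1)) (Fin (n+1)) D :=
          fun i k => if i ≠ r ∧ k = r then A i j₀ * uinv else 0 with hNdef
        set N' : Matrix (Fin (n+1)) (Fin (n+1)) D :=
          fun k j => if k = j₀ ∧ j ≠ j₀ then uinv * A r j else 0 with hN'def
        have hNsq : N * N = 0 := by
          ext i j
          simp only [Matrix.mul_apply, Matrix.zero_apply]
          refine Finset.sum_eq_zero fun k _ => ?_
          rcases eq_or_ne k r with rfl | hk
          · simp [hNdef]
          · simp [hNdef, hk]
        have hN'sq : N' * N' = 0 := by
          ext i j
          simp only [Matrix.mul_apply, Matrix.zero_apply]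
          refine Finset.sum_eq_zero fun k _ => ?_
          rcases eq_or_ne k j₀ with rfl | hk
          · simp [hN'def]
          · simp [hN'def, hk]
        have hNA : ∀ i j, (N * A) i j = if i = r then 0 else A i j₀ * (uinv * A r j) := by
          intro i j
          rw [Matrix.mul_apply]
          rw [Finset.sum_eq_single_of_mem r (Finset.mem_univ r)
            (fun k _ hk => by simp [hNdef, hk])]
          rcases eq_or_ne i r with rfl | hi
          · simp [hNdef]
          · simp [hNdef, hi, mul_assoc]
        have hMN' : ∀ (M : Matrix (Fin (n+1)) (Fin (n+1)) D) i j,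
            (M * N') i j = if j = j₀ then 0 else M i j₀ * (uinv * A r j) := by
          intro M i j
          rw [Matrix.mul_apply]
          rw [Finset.sum_eq_single_of_mem j₀ (Finset.mem_univ j₀)
            (fun k _ hk => by simp [hN'def, hk])]
          rcases eq_or_ne j j₀ with rfl | hj
          · simp [hN'def]
          · simp [hN'def, hj]
        set A'' : Matrix (Fin (n+1)) (Fin (n+1)) D := fun i j =>
          if i = r then (if j = j₀ then A r j₀ else 0)
          else if j = j₀ then 0 else A i j - A i j₀ * (uinv * A r j) with hA''def
        have hA''B : ∀ (i' : Fin n) (j' : Fin n),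
            A'' i'.castSucc (j₀.succAbove j') = B i' j' := by
          intro i' j'
          simp [hA''def, hcsne i', Fin.succAbove_ne, hBdef]
        have hEAF : (1 - N) * A * (1 - N') = A'' := by
          ext i j
          simp only [Matrix.sub_mul, Matrix.mul_sub, Matrix.one_mul, Matrix.mul_one,
            Matrix.sub_apply]
          rw [hNA, hMN' A, hMN' (N * A), hNA]
          rcases eq_or_ne i r with rfl | hi
          · rcases eq_or_ne j j₀ with rfl | hj
            · simp [hA''def]
            · simp [hA''def, hj, hu1']
          · rcases eq_or_ne j j₀ with rfl | hj
            · simp [hA''def, hi, hu2]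
            · simp only [hA''def, if_neg hi, if_neg hj, hu2, mul_one]
              abel
        set C' : Matrix (Fin (n+1)) (Fin (n+1)) D :=
          Fin.insertNth j₀ (Fin.snoc (0 : Fin n → D) uinv)
            (fun k' => Fin.snoc (C k') (0 : D)) with hC'def
        have hC'j₀ : ∀ l, C' j₀ l = (Fin.snoc (0 : Fin n → D) uinv : Fin (n+1) → D) l := by
          intro l
          rw [hC'def]
          exact congrFun (Fin.insertNth_apply_same j₀ _ _) l
        have hC'sA : ∀ k' l, C' (j₀.succAbove k') l = (Fin.snoc (C k') (0 : D) : Fin (n+1) → D) l := by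
          intro k' l
          rw [hC'def]
          exact congrFun (Fin.insertNth_apply_succAbove j₀ _ _ k') l
        have hA''C' : A'' * C' = 1 := by
          ext i j
          rw [Matrix.mul_apply, Fin.sum_univ_succAbove _ j₀]
          refine Fin.lastCases ?_ (fun j' => ?_) j
          · -- j = last = r
            simp only [hC'j₀, hC'sA, Fin.snoc_last]
            refine Fin.lastCases ?_ (fun i' => ?_) i
            · simp [hA''def, hu1, Matrix.one_apply, ← hr]
            · simp [hA''def, hcsne i', Matrix.one_apply, (hcsne i')]
          · -- j = castSucc j'
            simp only [hC'j₀, hC'sA, Fin.snoc_castSucc]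
            refine Fin.lastCases ?_ (fun i' => ?_) i
            · simp [hA''def, Fin.succAbove_ne, Matrix.one_apply, (Fin.castSucc_lt_last j').ne', ← hr, (hcsne j').symm]
            · have h := congrFun (congrFun hBC i') j'
              rw [Matrix.mul_apply] at h
              simp only [hA''B]
              rw [h]
              simp [Matrix.one_apply, Fin.castSucc_inj]
        have hC'A'' : C' * A'' = 1 := by
          ext i j
          rw [Matrix.mul_apply, Fin.sum_univ_castSucc]
          refine j₀.succAboveCases ?_ (fun i' => ?_) i
          · -- i = j₀
            simp only [hC'j₀, Fin.snoc_castSucc, Fin.snoc_last, Pi.zero_apply, zero_mul,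
              Finset.sum_const_zero, zero_add]
            refine j₀.succAboveCases ?_ (fun j' => ?_) j
            · simp [hA''def, hu2, Matrix.one_apply, ← hr]
            · simp [hA''def, Fin.succAbove_ne, Matrix.one_apply,
                (Fin.succAbove_ne j₀ j').symm, ← hr]
          · -- i = succAbove i'
            simp only [hC'sA, Fin.snoc_castSucc, Fin.snoc_last, zero_mul, add_zero]
            refine j₀.succAboveCases ?_ (fun j' => ?_) j
            · have : ∀ k' : Fin n, A'' k'.castSucc j₀ = 0 := by
                intro k'
                simp [hA''def, hcsne k']
              simp [this, Matrix.one_apply, Fin.succAbove_ne j₀ i']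
            · have h := congrFun (congrFun hCB i') j'
              rw [Matrix.mul_apply] at h
              simp only [hA''B]
              rw [h]
              simp [Matrix.one_apply, Fin.succAbove_right_inj]
        have honeminus : ∀ M : Matrix (Fin (n+1)) (Fin (n+1)) D, M * M = 0 →
            (1 + M) * (1 - M) = 1 ∧ (1 - M) * (1 + M) = 1 := by
          intro M hM
          constructor
          · have h : (1 + M) * (1 - M) = 1 - M * M := by noncomm_ring
            rw [h, hM, sub_zero]
          · have h : (1 - M) * (1 + M) = 1 - M * M := by noncomm_ring
            rw [h, hM, sub_zero]
        have hA_eq : A = (1 + N) * A'' * (1 + N') := by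
          rw [← hEAF]
          have h : (1 + N) * ((1 - N) * A * (1 - N')) * (1 + N')
              = ((1 + N) * (1 - N)) * A * ((1 - N') * (1 + N')) := by
            noncomm_ring
          rw [h, (honeminus N hNsq).1, (honeminus N' hN'sq).2, Matrix.one_mul, Matrix.mul_one]
        rw [hA_eq]
        refine (IsUnit.mul (IsUnit.mul ?_ ?_) ?_)
        · exact isUnit_iff_exists.mpr ⟨1 - N, (honeminus N hNsq).1, (honeminus N hNsq).2⟩
        · exact isUnit_iff_exists.mpr ⟨C', hA''C', hC'A''⟩
        · exact isUnit_iff_exists.mpr ⟨1 - N', (honeminus N' hN'sq).2.symm ▸ (honeminus N' hN'sq).1, (honeminus N' hN'sq).2⟩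
      · -- kernel vector for B extends to kernel vector for A
        right
        obtain ⟨γ, w, hw0, hwh, hwA⟩ := hker
        set s : D := ∑ i', w i' * A i'.castSucc j₀ with hs
        refine ⟨γ, Fin.snoc w (-(s * uinv)), ?_, ?_, ?_⟩
        · intro h
          apply hw0
          funext i'
          have := congrFun h i'.castSucc
          simpa [Fin.snoc_castSucc] using this
        · intro i
          refine Fin.lastCases ?_ (fun i' => ?_) i
          · rw [Fin.snoc_last]
            refine neg_mem (?_ : s * uinv ∈ _)
            have hsmem : s ∈ 𝒜 (γ * (β j₀)⁻¹) := by
              refine AddSubgroup.sum_mem _ fun i' _ => ?_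
              have h1 := hmul (hwh i') (hA i'.castSucc j₀)
              have : γ * (α i'.castSucc)⁻¹ * (α i'.castSucc * (β j₀)⁻¹)
                  = γ * (β j₀)⁻¹ := by group
              rwa [this] at h1
            have h2 := hmul hsmem huinv
            have : γ * (β j₀)⁻¹ * (β j₀ * (α r)⁻¹) = γ * (α r)⁻¹ := by group
            rwa [this] at h2
          · rw [Fin.snoc_castSucc]
            exact hwh i'
        · funext j
          have hcol : ∀ j, (Fin.snoc w (-(s * uinv)) ᵥ* A) j
              = (∑ i', w i' * A i'.castSucc j) + (-(s * uinv)) * A r j := by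
            intro j
            simp only [Matrix.vecMul, dotProduct]
            rw [Fin.sum_univ_castSucc]
            simp [Fin.snoc_castSucc, Fin.snoc_last, hr]
          rcases eq_or_ne j j₀ with heq | hne
          · subst heq
            rw [hcol, neg_mul, mul_assoc, hu2, mul_one, ← hs, add_neg_cancel]; simp
          · obtain ⟨j', rfl⟩ := Fin.exists_succAbove_eq hne
            have hkey : ∑ i', w i' * A i'.castSucc (j₀.succAbove j')
                = s * (uinv * A r (j₀.succAbove j')) := by
              have h0 := congrFun hwA j'
              simp only [Matrix.vecMul, dotProduct, Pi.zero_apply, hBdef] at h0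
              have hsum : ∑ i', w i' * (A i'.castSucc (j₀.succAbove j')
                  - A i'.castSucc j₀ * (uinv * A r (j₀.succAbove j'))) = 0 := h0
              rw [Finset.sum_congr rfl (fun i' _ => mul_sub (w i') _ _),
                Finset.sum_sub_distrib, sub_eq_zero] at hsum
              rw [hsum, hs, Finset.sum_mul]
              exact Finset.sum_congr rfl fun i' _ => by rw [mul_assoc]
            rw [hcol, hkey, neg_mul, mul_assoc, ← mul_assoc s uinv _, add_neg_cancel]; simp

end AuxGradedInverse

/-- Let `D` be a `Γ`-graded division ring, `S` a nonzero ring and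
`f : D → S` a ring homomorphism.  If `A` is an `n × n` homogeneous matrix of
distribution `(α, β)` over `D` (`n ≥ 1`), then `A` is invertible in `M_n(D)` if
and only if `A^f` is invertible in `M_n(S)`. -/
theorem graded_division_ring_isUnit_matrix_iff_isUnit_map
    {Γ : Type u} [Group Γ] [DecidableEq Γ] {D : Type v} [Ring D] [Nontrivial D]
    (𝒜 : Γ → AddSubgroup D)
    (hinternal : DirectSum.IsInternal 𝒜)
    (hone : (1 : D) ∈ 𝒜 1)
    (hmul : ∀ {γ δ : Γ} {x y : D}, x ∈ 𝒜 γ → y ∈ 𝒜 δ → x * y ∈ 𝒜 (γ * δ))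
    (hdiv : ∀ {γ : Γ} {x : D}, x ∈ 𝒜 γ → x ≠ 0 → IsUnit x)
    {S : Type w} [Ring S] [Nontrivial S] (f : D →+* S)
    {n : ℕ} (hn : 0 < n) (A : Matrix (Fin n) (Fin n) D)
    (α β : Fin n → Γ) (hA : IsHomog 𝒜 A α β) :
    IsUnit A ↔ IsUnit (A.map ⇑f) := by
  constructor
  · intro h
    have := h.map (RingHom.mapMatrix f : Matrix (Fin n) (Fin n) D →+* Matrix (Fin n) (Fin n) S)
    simpa [RingHom.mapMatrix_apply] using this
  · intro h
    rcases key_lemma 𝒜 hinternal hone hmul hdiv n A α β hA with hu | ⟨γ, v, hv0, hvh, hvA⟩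
    · exact hu
    · exfalso
      obtain ⟨i₀, hi₀⟩ : ∃ i, v i ≠ 0 := Function.ne_iff.mp hv0
      obtain ⟨uu, huu⟩ := hdiv (hvh i₀) hi₀
      obtain ⟨Bm, hAB, hBA⟩ := isUnit_iff_exists.mp h
      have hfv : (fun i => f (v i)) ᵥ* (A.map ⇑f) = 0 := by
        funext j
        simp only [Matrix.vecMul, dotProduct, Matrix.map_apply, Pi.zero_apply]
        rw [show ∑ i, f (v i) * f (A i j) = f (∑ i, v i * A i j) by
          rw [map_sum f]
          exact Finset.sum_congr rfl (fun i _ => (map_mul f _ _).symm)]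
        have hvAj := congrFun hvA j
        simp only [Matrix.vecMul, dotProduct, Pi.zero_apply] at hvAj
        rw [hvAj, map_zero]
      have hzero : (fun i => f (v i)) = 0 := by
        have h1 : ((fun i => f (v i)) ᵥ* (A.map ⇑f)) ᵥ* Bm = (0 : Fin n → S) ᵥ* Bm := by
          rw [hfv]
        rw [Matrix.vecMul_vecMul, hAB, Matrix.vecMul_one, Matrix.zero_vecMul] at h1
        exact h1
      have hz : f (v i₀) = 0 := congrFun hzero i₀
      have hun : IsUnit (f (v i₀)) := by
        rw [← huu]
        exact (Units.isUnit uu).map f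
      exact hun.ne_zero hz
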